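/- arXiv:2509.05563 — 4 statements merged into one kernel-verified Lean document; each statement's English description precedes it below -/
import Mathlib

section
/- Let d ≥ 2, let (Ω, ℱ, ℙ) be a probability space with Ω a standard Borel space, let X : Ω → ℝ^d be a random vector taking values almost surely in the simplex Δ^{d−1}, and let Y : Ω → 𝒴 be a random element of a standard Borel space 𝒴. Call a linear subspace S ⊆ ℝ^d an SDR subspace if there exist m ≤ d and a matrix B ∈ ℝ^{m×d} with row(B) = S such that Y and X are conditionally independent given the σ-algebra generated by the random vector BX. Then the intersection of all SDR subspaces equals the zero subspace {0}. -/
open MeasureTheory ProbabilityTheory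

/-- If `X` is a.e. equal to a measurable function of `Z`, then any `Y` is conditionally
independent of `X` given the σ-algebra generated by `Z`. -/
lemma condIndepFun_of_ae_eq_comp
    {Ω : Type*} {mΩ : MeasurableSpace Ω} [StandardBorelSpace Ω]
    (μ : Measure Ω) [IsFiniteMeasure μ]
    {𝒴 β γ : Type*} [MeasurableSpace 𝒴] [MeasurableSpace β] [MeasurableSpace γ]
    (Y : Ω → 𝒴) (hY : Measurable Y)
    (X : Ω → β) (hX : Measurable X)
    (Z : Ω → γ) (hZ : Measurable Z)
    (φ : γ → β) (hφ : Measurable φ)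
    (hXZ : ∀ᵐ ω ∂μ, X ω = φ (Z ω)) :
    CondIndepFun (MeasurableSpace.comap Z inferInstance) hZ.comap_le Y X μ := by
  have hle : MeasurableSpace.comap Z inferInstance ≤ mΩ := hZ.comap_le
  rw [condIndepFun_iff_condExp_inter_preimage_eq_mul hY hX]
  intro s t hs ht
  set C : Set Ω := (fun ω => φ (Z ω)) ⁻¹' t with hCdef
  have hC : MeasurableSet[MeasurableSpace.comap Z inferInstance] C := ⟨φ ⁻¹' t, hφ ht, rfl⟩
  -- indicator congruences
  have h1 : (Set.indicator (Y ⁻¹' s ∩ X ⁻¹' t) (fun _ => (1 : ℝ)))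
      =ᵐ[μ] Set.indicator (Y ⁻¹' s ∩ C) (fun _ => (1 : ℝ)) := by
    filter_upwards [hXZ] with ω hω
    have hmm : ω ∈ Y ⁻¹' s ∩ X ⁻¹' t ↔ ω ∈ Y ⁻¹' s ∩ C := by
      constructor <;> rintro ⟨ha, hb⟩ <;>
        exact ⟨ha, by simpa [hCdef, Set.mem_preimage, hω] using hb⟩
    by_cases hωc : ω ∈ Y ⁻¹' s ∩ C
    · rw [Set.indicator_of_mem (hmm.mpr hωc), Set.indicator_of_mem hωc]
    · rw [Set.indicator_of_notMem (fun h => hωc (hmm.mp h)), Set.indicator_of_notMem hωc]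
  have h2 : (Set.indicator (X ⁻¹' t) (fun _ => (1 : ℝ)))
      =ᵐ[μ] Set.indicator C (fun _ => (1 : ℝ)) := by
    filter_upwards [hXZ] with ω hω
    have hmm : ω ∈ X ⁻¹' t ↔ ω ∈ C := by
      simp [hCdef, Set.mem_preimage, hω]
    by_cases hωc : ω ∈ C
    · rw [Set.indicator_of_mem (hmm.mpr hωc), Set.indicator_of_mem hωc]
    · rw [Set.indicator_of_notMem (fun h => hωc (hmm.mp h)), Set.indicator_of_notMem hωc]
  have hCsm : StronglyMeasurable[MeasurableSpace.comap Z inferInstance]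
      (Set.indicator C (fun _ => (1 : ℝ))) :=
    stronglyMeasurable_const.indicator hC
  have hCint : Integrable (Set.indicator C (fun _ => (1 : ℝ))) μ :=
    (integrable_const (1 : ℝ)).indicator (hle _ hC)
  have hAint : Integrable (Set.indicator (Y ⁻¹' s) (fun _ => (1 : ℝ))) μ :=
    (integrable_const (1 : ℝ)).indicator (hY hs)
  have hmul : (Set.indicator (Y ⁻¹' s ∩ C) (fun _ => (1 : ℝ)))
      = (Set.indicator C (fun _ => (1 : ℝ))) * (Set.indicator (Y ⁻¹' s) (fun _ => (1 : ℝ))) := by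
    funext ω
    by_cases hωC : ω ∈ C <;> by_cases hωA : ω ∈ Y ⁻¹' s <;>
      simp [Set.indicator_apply, hωC, hωA]
  have hmulint : Integrable ((Set.indicator C (fun _ => (1 : ℝ)))
      * (Set.indicator (Y ⁻¹' s) (fun _ => (1 : ℝ)))) μ := by
    rw [← hmul]
    exact (integrable_const (1 : ℝ)).indicator ((hY hs).inter (hle _ hC))
  have hCcond : (μ⟦X ⁻¹' t | MeasurableSpace.comap Z inferInstance⟧)
      =ᵐ[μ] Set.indicator C (fun _ => (1 : ℝ)) := by
    have h := condExp_congr_ae (m := MeasurableSpace.comap Z inferInstance) h2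
    rwa [condExp_of_stronglyMeasurable hle hCsm hCint] at h
  calc (μ⟦Y ⁻¹' s ∩ X ⁻¹' t | MeasurableSpace.comap Z inferInstance⟧)
      =ᵐ[μ] (μ⟦Y ⁻¹' s ∩ C | MeasurableSpace.comap Z inferInstance⟧) := condExp_congr_ae h1
    _ =ᵐ[μ] (Set.indicator C (fun _ => (1 : ℝ)))
          * (μ⟦Y ⁻¹' s | MeasurableSpace.comap Z inferInstance⟧) := by
        rw [hmul]
        exact condExp_mul_of_stronglyMeasurable_left hCsm hmulint hAint
    _ =ᵐ[μ] fun ω => (μ⟦Y ⁻¹' s | MeasurableSpace.comap Z inferInstance⟧) ω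
          * (μ⟦X ⁻¹' t | MeasurableSpace.comap Z inferInstance⟧) ω := by
        filter_upwards [hCcond] with ω hω
        simp [hω, mul_comm]

/-- For a compositional predictor `X` (valued a.s. in the simplex `Δ^{d-1}`)
and any response `Y`, the intersection of all SDR subspaces (row spaces of matrices `B`
such that `Y ⟂⟂ X | σ(BX)`) is the zero subspace. -/
theorem intersection_of_SDR_subspaces_eq_bot
    (d : ℕ) (hd : 2 ≤ d)
    (Ω : Type*) [mΩ : MeasurableSpace Ω] [StandardBorelSpace Ω]
    (μ : Measure Ω) [IsProbabilityMeasure μ]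
    (𝒴 : Type*) [MeasurableSpace 𝒴] [StandardBorelSpace 𝒴]
    (X : Ω → (Fin d → ℝ)) (hX : Measurable X)
    (hXsimplex : ∀ᵐ ω ∂μ, X ω ∈ stdSimplex ℝ (Fin d))
    (Y : Ω → 𝒴) (hY : Measurable Y) :
    sInf {S : Submodule ℝ (Fin d → ℝ) |
      ∃ (m : ℕ) (_ : m ≤ d) (B : Matrix (Fin m) (Fin d) ℝ),
        Submodule.span ℝ (Set.range B) = S ∧
        ∃ (hle : MeasurableSpace.comap (fun ω => B.mulVec (X ω)) inferInstance ≤ mΩ),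
          CondIndepFun (MeasurableSpace.comap (fun ω => B.mulVec (X ω)) inferInstance)
            hle Y X μ} = ⊥ := by
  -- For each coordinate `i`, the matrix `Bᵢ x = x - (∑ x) eᵢ` yields an SDR subspace
  -- contained in `{v : v i = 0}`; intersecting over all `i` gives `⊥`.
  refine le_antisymm (fun x hx => ?_) bot_le
  simp only [Submodule.mem_bot]
  rw [Submodule.mem_sInf] at hx
  have key : ∀ i : Fin d, x i = 0 := by
    intro i
    -- The matrix `Bᵢ` with `Bᵢ v = v - (∑ v) • eᵢ`.
    set B : Matrix (Fin d) (Fin d) ℝ :=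
      fun j k => (if j = k then (1 : ℝ) else 0) - (if j = i then 1 else 0) with hBdef
    have hBmeas : Measurable (fun v : Fin d → ℝ => B.mulVec v) :=
      (LinearMap.continuous_of_finiteDimensional (Matrix.mulVecLin B)).measurable
    have hZ : Measurable (fun ω => B.mulVec (X ω)) := hBmeas.comp hX
    have hφ : Measurable (fun v : Fin d → ℝ => v + Pi.single i 1) :=
      measurable_id.add_const _
    have hXZ : ∀ᵐ ω ∂μ, X ω = B.mulVec (X ω) + Pi.single i 1 := by
      filter_upwards [hXsimplex] with ω hω
      funext j
      have hsum : ∑ k, X ω k = 1 := hω.2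
      simp only [Pi.add_apply, Matrix.mulVec, dotProduct, hBdef]
      simp only [sub_mul, Finset.sum_sub_distrib, ite_mul, one_mul, zero_mul]
      rw [Finset.sum_ite_eq (Finset.univ : Finset (Fin d)) j (fun k => X ω k)]
      by_cases hj : j = i <;>
        simp [hj, hsum, Pi.single_apply, eq_comm]
    have hmem : Submodule.span ℝ (Set.range B) ∈
        {S : Submodule ℝ (Fin d → ℝ) |
          ∃ (m : ℕ) (_ : m ≤ d) (B : Matrix (Fin m) (Fin d) ℝ),
            Submodule.span ℝ (Set.range B) = S ∧
            ∃ (hle : MeasurableSpace.comap (fun ω => B.mulVec (X ω)) inferInstance ≤ mΩ),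
              CondIndepFun (MeasurableSpace.comap (fun ω => B.mulVec (X ω)) inferInstance)
                hle Y X μ} := by
      refine ⟨d, le_refl d, B, rfl, hZ.comap_le, ?_⟩
      exact condIndepFun_of_ae_eq_comp μ Y hY X hX _ hZ
        (fun v => v + Pi.single i 1) hφ hXZ
    have hxS : x ∈ Submodule.span ℝ (Set.range B) := hx _ hmem
    -- every row of `B` has vanishing `i`-th coordinate
    have hspan : Submodule.span ℝ (Set.range B) ≤
        LinearMap.ker (LinearMap.proj i : (Fin d → ℝ) →ₗ[ℝ] ℝ) := by
      rw [Submodule.span_le]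
      rintro _ ⟨j, rfl⟩
      simp [LinearMap.mem_ker, hBdef]
    have := hspan hxS
    simpa [LinearMap.mem_ker] using this
  funext j
  exact key j
end

section
/- Let V be a linear subspace of ℝ^d with dim V = m and 𝟙_d ∈ V, where 𝟙_d = (1,…,1)ᵀ ∈ ℝ^d. Then there exists a column-stochastic matrix P ∈ M_{m,d}, all of whose entries are strictly positive, such that row(P) = V. -/
/-- Any `m`-dimensional subspace `V ⊆ ℝ^d` containing the all-ones vector is the
row space of a column-stochastic matrix `P ∈ M_{m,d}` with strictly positive entries. -/
theorem exists_positive_column_stochastic_with_row_space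
    (d m : ℕ) (V : Submodule ℝ (Fin d → ℝ))
    (hdim : Module.finrank ℝ V = m)
    (hone : (fun _ => (1 : ℝ)) ∈ V) :
    ∃ P : Matrix (Fin m) (Fin d) ℝ,
      (∀ i j, 0 < P i j) ∧ (∀ i j, P i j ≤ 1) ∧
      (∀ j, ∑ i, P i j = 1) ∧
      Submodule.span ℝ (Set.range P) = V := by
  classical
  by_cases hd : d = 0
  · subst hd
    have hsub : Subsingleton (Fin 0 → ℝ) := by infer_instance
    have hm : m = 0 := by
      rw [← hdim]
      have : V = ⊥ := Subsingleton.elim _ _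
      rw [this]
      simp
    subst hm
    refine ⟨0, fun i => i.elim0, fun i => i.elim0, fun j => j.elim0, ?_⟩
    have : Set.range (0 : Matrix (Fin 0) (Fin 0) ℝ) = ∅ := Set.range_eq_empty _
    rw [this, Submodule.span_empty]
    exact Subsingleton.elim _ _
  · have hd1 : 0 < d := Nat.pos_of_ne_zero hd
    have hone_ne : (fun _ => (1 : ℝ)) ≠ (0 : Fin d → ℝ) := by
      intro h
      have := congrFun h ⟨0, hd1⟩
      simpa using this
    have hm0 : m ≠ 0 := by
      intro hm
      rw [hm] at hdim
      have : V = ⊥ := Submodule.finrank_eq_zero.mp hdim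
      rw [this] at hone
      exact hone_ne (by simpa using hone)
    by_cases hm1 : m = 1
    · subst hm1
      refine ⟨fun _ _ => 1, fun i j => one_pos, fun i j => le_refl 1,
        fun j => by simp, ?_⟩
      have hr : Set.range (fun (_ : Fin 1) (_ : Fin d) => (1 : ℝ)) = {fun _ => (1 : ℝ)} :=
        Set.range_const
      rw [hr]
      apply Submodule.eq_of_le_of_finrank_le
      · rw [Submodule.span_le]; simpa using hone
      · rw [hdim, finrank_span_singleton hone_ne]
    · -- main case : m ≥ 2
      have hm2 : 2 ≤ m := by omega
      have hmR : (0 : ℝ) < m := by positivity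
      set v1 : V := ⟨fun _ => 1, hone⟩ with hv1def
      have hv1 : v1 ≠ 0 := by
        intro h
        exact hone_ne (congrArg Subtype.val h)
      let b : Module.Basis (Fin m) ℝ V := (Module.finBasis ℝ V).reindex (finCongr hdim)
      set c : Fin m → ℝ := fun k => b.repr v1 k with hc_def
      have hc : ∃ i0, c i0 ≠ 0 := by
        by_contra h
        push_neg at h
        apply hv1
        have hz : b.repr v1 = 0 := Finsupp.ext h
        have := congrArg b.repr.symm hz
        simpa using this
      obtain ⟨i0, hi0⟩ := hc
      set B : Fin m → Fin d → ℝ := fun i => (b i : Fin d → ℝ) with hB_def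
      have hBV : ∀ i, B i ∈ V := fun i => (b i).2
      have hone_eq : (fun _ => (1 : ℝ)) = ∑ k, c k • B k := by
        have h := b.sum_repr v1
        have h2 : ((∑ i, (b.repr v1) i • b i : V) : Fin d → ℝ) = ∑ k, c k • B k := by
          push_cast
          rfl
        exact (congrArg Subtype.val h.symm).trans h2
      set s : Fin d → ℝ := ∑ k, B k with hs_def
      have hsV : s ∈ V := Submodule.sum_mem _ fun k _ => hBV k
      set u : Fin m → Fin d → ℝ := fun i => B i - (if i = i0 then s else 0) with hu_def
      have husum : ∑ i, u i = 0 := by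
        simp only [hu_def, Finset.sum_sub_distrib, Finset.sum_ite_eq',
          Finset.mem_univ, if_true, hs_def]
        abel
      have huV : ∀ i, u i ∈ V := by
        intro i
        refine V.sub_mem (hBV i) ?_
        by_cases h : i = i0
        · simpa [h] using hsV
        · simp [h]
      set C : ℝ := 1 + ∑ i, ∑ j, |u i j| with hC_def
      have hC0 : 0 < C := by positivity
      have hCb : ∀ i j, |u i j| ≤ C := by
        intro i j
        have h1 : |u i j| ≤ ∑ j', |u i j'| :=
          Finset.single_le_sum (f := fun j' => |u i j'|) (fun j' _ => abs_nonneg _)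
            (Finset.mem_univ j)
        have h2 : ∑ j', |u i j'| ≤ ∑ i', ∑ j', |u i' j'| :=
          Finset.single_le_sum (f := fun i' => ∑ j', |u i' j'|)
            (fun i' _ => Finset.sum_nonneg fun j' _ => abs_nonneg _)
            (Finset.mem_univ i)
        have : (0:ℝ) ≤ ∑ i', ∑ j', |u i' j'| :=
          Finset.sum_nonneg fun i' _ => Finset.sum_nonneg fun j' _ => abs_nonneg _
        calc |u i j| ≤ ∑ i', ∑ j', |u i' j'| := le_trans h1 h2
          _ ≤ C := by rw [hC_def]; linarith
      set ε : ℝ := 1 / (2 * m * C) with hε_def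
      have hε : 0 < ε := by positivity
      have hεb : ∀ i j, |ε * u i j| ≤ 1 / (2 * m) := by
        intro i j
        rw [abs_mul, abs_of_pos hε]
        calc ε * |u i j| ≤ ε * C := by
              exact mul_le_mul_of_nonneg_left (hCb i j) hε.le
          _ = 1 / (2 * m) := by
              rw [hε_def]; field_simp
      set P : Matrix (Fin m) (Fin d) ℝ := fun i j => (m : ℝ)⁻¹ + ε * u i j with hP_def
      have hcol : ∀ j, ∑ i, P i j = 1 := by
        intro j
        have h0 : ∑ i, u i j = 0 := by
          have := congrFun husum j
          simpa using this
        simp only [hP_def]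
        rw [Finset.sum_add_distrib, ← Finset.mul_sum, h0]
        simp
        field_simp
      refine ⟨P, ?_, ?_, hcol, ?_⟩
      · intro i j
        have h := (abs_le.mp (hεb i j)).1
        have hinv : 1 / (2 * (m : ℝ)) < (m : ℝ)⁻¹ := by
          rw [div_lt_iff₀ (by positivity)]
          rw [inv_mul_eq_div, lt_div_iff₀ hmR]  -- maybe wrong; use nlinarith fallback
          nlinarith
        simp only [hP_def]
        linarith
      · intro i j
        have h := (abs_le.mp (hεb i j)).2
        have hm2R : (2 : ℝ) ≤ m := by exact_mod_cast hm2
        have : (m : ℝ)⁻¹ + 1 / (2 * m) ≤ 1 := by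
          rw [inv_eq_one_div]
          rw [div_add_div _ _ (by positivity) (by positivity)]
          rw [div_le_one (by positivity)]
          nlinarith
        simp only [hP_def]
        linarith
      · -- span equality
        set S := Submodule.span ℝ (Set.range P) with hS_def
        have hPmem : ∀ i, P i ∈ S := fun i => Submodule.subset_span ⟨i, rfl⟩
        have h1S : (fun _ => (1 : ℝ)) ∈ S := by
          have heq : (fun _ => (1 : ℝ)) = ∑ i, P i := by
            funext j
            rw [Finset.sum_apply]
            exact (hcol j).symm
          rw [heq]
          exact Submodule.sum_mem _ fun i _ => hPmem i
        have huS : ∀ i, u i ∈ S := by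
          intro i
          have heq : u i = ε⁻¹ • P i - (ε⁻¹ * (m : ℝ)⁻¹) • (fun _ => (1 : ℝ)) := by
            funext j
            simp only [Pi.sub_apply, Pi.smul_apply, smul_eq_mul, hP_def]
            field_simp
            ring
          rw [heq]
          exact S.sub_mem (S.smul_mem _ (hPmem i)) (S.smul_mem _ h1S)
        have hBne : ∀ k, k ≠ i0 → B k ∈ S := by
          intro k hk
          have heq : B k = u k := by
            funext j
            simp [hu_def, hk]
          rw [heq]
          exact huS k
        have hBi0 : B i0 ∈ S := by
          have hsum : c i0 • B i0 =
              (fun _ => (1 : ℝ)) - ∑ k ∈ Finset.univ.erase i0, c k • B k := by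
            rw [hone_eq, ← Finset.add_sum_erase _ _ (Finset.mem_univ i0)]
            abel
          have heq : B i0 = (c i0)⁻¹ •
              ((fun _ => (1 : ℝ)) - ∑ k ∈ Finset.univ.erase i0, c k • B k) := by
            rw [← hsum, smul_smul, inv_mul_cancel₀ hi0, one_smul]
          rw [heq]
          refine S.smul_mem _ (S.sub_mem h1S (Submodule.sum_mem _ fun k hk => ?_))
          exact S.smul_mem _ (hBne k (Finset.ne_of_mem_erase hk))
        have hBS : ∀ k, B k ∈ S := by
          intro k
          by_cases h : k = i0
          · rw [h]; exact hBi0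
          · exact hBne k h
        have hVspan : V = Submodule.span ℝ (Set.range B) := by
          have h1 : Submodule.span ℝ (Set.range (b : Fin m → V)) = ⊤ := b.span_eq
          have h2 := congrArg (Submodule.map V.subtype) h1
          rw [Submodule.map_span, Submodule.map_top, Submodule.range_subtype] at h2
          rw [← h2]
          congr 1
          rw [← Set.range_comp]
          rfl
        apply le_antisymm
        · rw [Submodule.span_le]
          rintro x ⟨i, rfl⟩
          have heq : P i = (m : ℝ)⁻¹ • (fun _ => (1 : ℝ)) + ε • u i := by
            funext j
            simp [hP_def]
          show P i ∈ V
          rw [heq]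
          exact V.add_mem (V.smul_mem _ hone) (V.smul_mem _ (huV i))
        · rw [hVspan, Submodule.span_le]
          rintro x ⟨k, rfl⟩
          exact hBS k
end

section
/- Let 1 ≤ k ≤ m ≤ d and let V be a linear subspace of ℝ^d with dim V = k and 𝟙_d ∈ V, where 𝟙_d = (1,…,1)ᵀ ∈ ℝ^d. Then there exists a column-stochastic matrix P ∈ M_{m,d} such that rank(P) = k and row(P) = V. Consequently, the row-space map P ↦ row(P) from the set of rank-k matrices in M_{m,d} onto the set of k-dimensional subspaces of ℝ^d containing 𝟙_d is surjective. -/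
/-- For `1 ≤ k ≤ m ≤ d`, every `k`-dimensional subspace `V ⊆ ℝ^d` containing the
all-ones vector is the row space of some rank-`k` column-stochastic matrix `P ∈ M_{m,d}`;
i.e., the row-space map from rank-`k` matrices in `M_{m,d}` onto `k`-dimensional subspaces
containing `𝟙_d` is surjective. -/
theorem exists_rank_k_column_stochastic_with_row_space
    (d m k : ℕ) (hk : 1 ≤ k) (hkm : k ≤ m) (hmd : m ≤ d)
    (V : Submodule ℝ (Fin d → ℝ))
    (hdim : Module.finrank ℝ V = k)
    (hone : (fun _ => (1 : ℝ)) ∈ V) :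
    ∃ P : Matrix (Fin m) (Fin d) ℝ,
      (∀ i j, 0 ≤ P i j ∧ P i j ≤ 1) ∧
      (∀ j, ∑ i, P i j = 1) ∧
      Module.finrank ℝ (Submodule.span ℝ (Set.range P)) = k ∧
      Submodule.span ℝ (Set.range P) = V := by
  classical
  have hm : 0 < m := lt_of_lt_of_le hk hkm
  have hd : 0 < d := lt_of_lt_of_le hm hmd
  have hmR : (0:ℝ) < (m:ℝ) := by exact_mod_cast hm
  let b : Module.Basis (Fin k) ℝ V := Module.finBasisOfFinrankEq ℝ V hdim
  set onev : V := ⟨fun _ => 1, hone⟩ with honev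
  have hone_ne : onev ≠ 0 := by
    intro h
    have h2 := congrArg (fun x : V => (x : Fin d → ℝ) ⟨0, hd⟩) h
    simp [honev] at h2
  obtain ⟨j0, hj0⟩ : ∃ j, b.repr onev j ≠ 0 := by
    by_contra h
    push_neg at h
    exact hone_ne ((LinearEquiv.map_eq_zero_iff _).mp (Finsupp.ext h))
  set c : Fin k → ℝ := fun j => b.repr onev j with hc
  set v : Fin k → (Fin d → ℝ) := fun j =>
    if j = j0 then (fun _ => (1:ℝ)) else (b j : Fin d → ℝ) with hv
  have hvV : ∀ j, v j ∈ V := by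
    intro j
    by_cases h : j = j0 <;> simp [hv, h, hone, SetLike.coe_mem]
  set W : ℕ → (Fin d → ℝ) := fun n =>
    if h : n < k then
      (if (⟨n, h⟩ : Fin k) = j0 then -∑ j ∈ Finset.univ.erase j0, v j else v ⟨n, h⟩)
    else 0 with hW
  set w : Fin m → (Fin d → ℝ) := fun i => W i.val with hwdef
  have hwV : ∀ i, w i ∈ V := by
    intro i
    simp only [hwdef, hW]
    split
    · split
      · exact neg_mem (Submodule.sum_mem _ fun j _ => hvV j)
      · exact hvV _
    · exact Submodule.zero_mem _
  -- sum of w's is zero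
  have hsumw : ∑ i : Fin m, w i = 0 := by
    have e1 : ∑ i : Fin m, w i = ∑ n ∈ Finset.range m, W n :=
      Fin.sum_univ_eq_sum_range W m
    have e2 : ∑ n ∈ Finset.range m, W n = ∑ n ∈ Finset.range k, W n := by
      refine (Finset.sum_subset (Finset.range_subset_range.mpr hkm) ?_).symm
      intro n _ hn
      rw [Finset.mem_range] at hn
      push_neg at hn
      simp [hW, Nat.not_lt.mpr hn]
    have e3 : ∑ n ∈ Finset.range k, W n = ∑ j : Fin k, W j.val :=
      (Fin.sum_univ_eq_sum_range W k).symm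
    have e4 : ∀ j : Fin k, W j.val =
        (if j = j0 then -∑ j' ∈ Finset.univ.erase j0, v j' else v j) := by
      intro j
      simp [hW, j.isLt, Fin.eta]
    rw [e1, e2, e3]
    have e5 : ∑ j : Fin k, W j.val =
        (-∑ j' ∈ Finset.univ.erase j0, v j') + ∑ j' ∈ Finset.univ.erase j0, v j' := by
      rw [← Finset.add_sum_erase Finset.univ (fun j : Fin k => W j.val)
        (Finset.mem_univ j0)]
      congr 1
      · simp [hW, j0.isLt]
      · refine Finset.sum_congr rfl fun j hj => ?_
        have hne : j ≠ j0 := Finset.ne_of_mem_erase hj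
        simp [hW, j.isLt, Fin.eta, hne]
    rw [e5]
    exact neg_add_cancel _
  set B : ℝ := ∑ i : Fin m, ∑ j : Fin d, |w i j| with hB
  have hB0 : 0 ≤ B :=
    Finset.sum_nonneg fun i _ => Finset.sum_nonneg fun j _ => abs_nonneg _
  have hwB : ∀ i j, |w i j| ≤ B := by
    intro i j
    calc |w i j| ≤ ∑ j' : Fin d, |w i j'| :=
          Finset.single_le_sum (f := fun j' => |w i j'|)
            (fun j' _ => abs_nonneg _) (Finset.mem_univ j)
      _ ≤ B := Finset.single_le_sum
          (f := fun i' => ∑ j' : Fin d, |w i' j'|)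
          (fun i' _ => Finset.sum_nonneg fun j' _ => abs_nonneg _) (Finset.mem_univ i)
  set ε : ℝ := (m:ℝ)⁻¹ * (B+1)⁻¹ with he
  have hB1 : (0:ℝ) < B + 1 := by linarith
  have hε : 0 < ε := mul_pos (inv_pos.mpr hmR) (inv_pos.mpr hB1)
  have hbound : ∀ i j, ε * |w i j| ≤ (m:ℝ)⁻¹ := by
    intro i j
    have h1 : ε * |w i j| ≤ ε * B := by
      refine mul_le_mul_of_nonneg_left ?_ hε.le
      exact hwB i j
    have h2 : ε * B ≤ (m:ℝ)⁻¹ := by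
      rw [he, mul_assoc]
      refine mul_le_of_le_one_right (inv_pos.mpr hmR).le ?_
      rw [inv_mul_le_iff₀ hB1]
      linarith
    linarith
  set P : Matrix (Fin m) (Fin d) ℝ := fun i j => (m:ℝ)⁻¹ + ε * w i j with hP
  -- column sums
  have hcol : ∀ j, ∑ i, P i j = 1 := by
    intro j
    have hz : ∑ i : Fin m, w i j = 0 := by
      have := congrFun hsumw j
      simpa [Finset.sum_apply] using this
    have : ∑ i : Fin m, P i j = ∑ i : Fin m, ((m:ℝ)⁻¹ + ε * w i j) := rfl
    rw [this, Finset.sum_add_distrib, ← Finset.mul_sum, hz, mul_zero, add_zero,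
      Finset.sum_const, Finset.card_univ, Fintype.card_fin, nsmul_eq_mul,
      mul_inv_cancel₀ hmR.ne']
  -- rows as vectors
  have hrow : ∀ i, P i = (m:ℝ)⁻¹ • (fun _ => (1:ℝ)) + ε • w i := by
    intro i
    funext j
    simp [hP, Pi.smul_apply, smul_eq_mul, mul_one]
  set S : Submodule ℝ (Fin d → ℝ) := Submodule.span ℝ (Set.range P) with hS
  have hSle : S ≤ V := by
    rw [hS, Submodule.span_le]
    rintro _ ⟨i, rfl⟩
    rw [hrow i]
    exact Submodule.add_mem _ (Submodule.smul_mem _ _ hone)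
      (Submodule.smul_mem _ _ (hwV i))
  have h1S : (fun _ => (1:ℝ)) ∈ S := by
    have hsum : ∑ i : Fin m, P i = (fun _ => (1:ℝ)) := by
      funext j
      rw [Finset.sum_apply]
      exact hcol j
    rw [← hsum]
    exact Submodule.sum_mem _ fun i _ => Submodule.subset_span ⟨i, rfl⟩
  have hvS : ∀ j, v j ∈ S := by
    intro j
    by_cases hj : j = j0
    · simpa [hv, hj] using h1S
    · set i : Fin m := Fin.castLE hkm j with hi
      have hwi : w i = v j := by
        have hik : (i : ℕ) < k := by simpa [hi] using j.isLt
        simp only [hwdef, hW, dif_pos hik]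
        have : (⟨(i:ℕ), hik⟩ : Fin k) = j := by
          apply Fin.ext
          simp [hi]
        rw [this, if_neg hj]
      have hPin : P i ∈ S := Submodule.subset_span ⟨i, rfl⟩
      have hvj : v j = ε⁻¹ • (P i - (m:ℝ)⁻¹ • (fun _ => (1:ℝ))) := by
        rw [hrow i, hwi]
        rw [add_sub_cancel_left, smul_smul, inv_mul_cancel₀ hε.ne', one_smul]
      rw [hvj]
      exact Submodule.smul_mem _ _ (Submodule.sub_mem _ hPin
        (Submodule.smul_mem _ _ h1S))
  have hrepr : ∑ j : Fin k, c j • (b j : Fin d → ℝ) = (fun _ => (1:ℝ)) := by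
    have h0 := congrArg (Subtype.val) (b.sum_repr onev)
    rw [Submodule.coe_sum] at h0
    exact h0
  have hcj0 : c j0 ≠ 0 := hj0
  have hbS : ∀ j, (b j : Fin d → ℝ) ∈ S := by
    intro j
    by_cases hj : j = j0
    · rw [hj]
      have hsplit : c j0 • (b j0 : Fin d → ℝ)
          + ∑ j' ∈ Finset.univ.erase j0, c j' • (b j' : Fin d → ℝ)
          = (fun _ => (1:ℝ)) := by
        rw [Finset.add_sum_erase Finset.univ
          (fun j' : Fin k => c j' • (b j' : Fin d → ℝ)) (Finset.mem_univ j0)]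
        exact hrepr
      have hb0 : (b j0 : Fin d → ℝ) = (c j0)⁻¹ •
          ((fun _ => (1:ℝ)) - ∑ j' ∈ Finset.univ.erase j0, c j' • (b j' : Fin d → ℝ)) := by
        rw [← hsplit]
        rw [add_sub_cancel_right, smul_smul, inv_mul_cancel₀ hcj0, one_smul]
      rw [hb0]
      refine Submodule.smul_mem _ _ (Submodule.sub_mem _ h1S
        (Submodule.sum_mem _ fun j' hj' => Submodule.smul_mem _ _ ?_))
      have : (b j' : Fin d → ℝ) = v j' := by
        rw [hv]
        simp [Finset.ne_of_mem_erase hj']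
      rw [this]
      exact hvS j'
    · have : (b j : Fin d → ℝ) = v j := by
        rw [hv]; simp [hj]
      rw [this]
      exact hvS j
  have hVle : V ≤ S := by
    intro x hx
    have hx2 : ∑ j : Fin k, (b.repr ⟨x, hx⟩ j) • (b j : Fin d → ℝ) = x := by
      have h0 := congrArg (Subtype.val) (b.sum_repr ⟨x, hx⟩)
      rw [Submodule.coe_sum] at h0
      exact h0
    rw [← hx2]
    exact Submodule.sum_mem _ fun j _ => Submodule.smul_mem _ _ (hbS j)
  have hspan : Submodule.span ℝ (Set.range P) = V := le_antisymm hSle hVle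
  refine ⟨P, ?_, hcol, ?_, hspan⟩
  · intro i j
    have hb1 := hbound i j
    have hb2 : -(|w i j|) ≤ w i j := neg_abs_le _
    have hb3 : w i j ≤ |w i j| := le_abs_self _
    have hb4 : ε * (-(|w i j|)) ≤ ε * w i j := mul_le_mul_of_nonneg_left hb2 hε.le
    have hb5 : ε * w i j ≤ ε * |w i j| := mul_le_mul_of_nonneg_left hb3 hε.le
    constructor
    · have : (0:ℝ) ≤ (m:ℝ)⁻¹ + ε * w i j := by nlinarith
      simpa [hP] using this
    · rcases Nat.lt_or_ge m 2 with h2 | h2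
      · -- m = 1, so k = 1, so w = 0
        have hm1 : m = 1 := le_antisymm (Nat.lt_succ_iff.mp h2) hm
        have hk1 : k = 1 := le_antisymm (hm1 ▸ hkm) hk
        have hwz : w i j = 0 := by
          have hik : (i : ℕ) < k := by omega
          have hjj : (⟨(i:ℕ), hik⟩ : Fin k) = j0 := by
            apply Fin.ext
            omega
          have hempty : (Finset.univ.erase j0 : Finset (Fin k)) = ∅ := by
            apply Finset.eq_empty_of_forall_notMem
            intro x hx
            exact (Finset.ne_of_mem_erase hx) (by apply Fin.ext; omega)
          simp [hwdef, hW, dif_pos hik, hjj, hempty]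
        have : P i j = (m:ℝ)⁻¹ := by simp [hP, hwz]
        rw [this, hm1]
        norm_num
      · have hm2 : (2:ℝ) ≤ (m:ℝ) := by exact_mod_cast h2
        have hinv : (m:ℝ)⁻¹ ≤ 2⁻¹ := inv_anti₀ (by norm_num) hm2
        have : P i j = (m:ℝ)⁻¹ + ε * w i j := rfl
        rw [this]
        linarith
  · exact hspan ▸ hdim
end

section
/- Let 𝒰 and 𝒱 be topological spaces and let M be an open connected subset of the product space 𝒰 × 𝒱. Then for any two points (u, v) and (u', v') of M, there exists a finite sequence of points (u⁽⁰⁾, v⁽⁰⁾), (u⁽¹⁾, v⁽¹⁾), …, (u⁽ˡ⁾, v⁽ˡ⁾) in M such that (u⁽⁰⁾, v⁽⁰⁾) = (u, v), (u⁽ˡ⁾, v⁽ˡ⁾) = (u', v'), and for each i = 0,…,l−1 at least one coordinate is fixed between consecutive points: u⁽ⁱ⁾ = u⁽ⁱ⁺¹⁾ or v⁽ⁱ⁾ = v⁽ⁱ⁺¹⁾. -/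
private lemma chain_of_reflTransGen {U V : Type*} (M : Set (U × V)) (p q : U × V)
    (hp : p ∈ M)
    (h : Relation.ReflTransGen (fun x y => y ∈ M ∧ (x.1 = y.1 ∨ x.2 = y.2)) p q) :
    ∃ (l : ℕ) (c : Fin (l + 1) → U × V),
      (∀ i, c i ∈ M) ∧ c 0 = p ∧ c (Fin.last l) = q ∧
      ∀ i : Fin l, (c i.castSucc).1 = (c i.succ).1 ∨ (c i.castSucc).2 = (c i.succ).2 := by
  induction h with
  | refl => exact ⟨0, fun _ => p, fun _ => hp, rfl, rfl, fun i => i.elim0⟩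
  | tail hab hbc ih =>
    rename_i b c'
    obtain ⟨l, c, hmem, h0, hlast, hadj⟩ := ih
    refine ⟨l + 1, Fin.snoc c c', ?_, ?_, ?_, ?_⟩
    · intro i
      refine Fin.lastCases ?_ (fun j => ?_) i
      · simpa using hbc.1
      · simpa using hmem j
    · have : (0 : Fin (l + 2)) = Fin.castSucc 0 := rfl
      rw [this, Fin.snoc_castSucc]; exact h0
    · simp
    · intro i
      refine Fin.lastCases ?_ (fun j => ?_) i
      · have h1 : (Fin.last l).castSucc = Fin.castSucc (Fin.last l) := rfl
        have h2 : (Fin.last l).succ = Fin.last (l + 1) := rfl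
        rw [h1, h2, Fin.snoc_castSucc, Fin.snoc_last, hlast]
        exact hbc.2
      · rw [Fin.succ_castSucc]
        simp only [Fin.snoc_castSucc]
        exact hadj j

/-- Every open connected subset `M` of a product of topological spaces is an
M-set: any two of its points can be joined by a finite "stairway" in `M`, i.e. a finite chain
of points of `M` in which consecutive points agree in at least one coordinate. -/
theorem open_connected_subset_of_product_is_M_set
    (U V : Type*) [TopologicalSpace U] [TopologicalSpace V]
    (M : Set (U × V)) (hopen : IsOpen M) (hconn : IsConnected M)
    (p q : U × V) (hp : p ∈ M) (hq : q ∈ M) :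
    ∃ (l : ℕ) (c : Fin (l + 1) → U × V),
      (∀ i, c i ∈ M) ∧ c 0 = p ∧ c (Fin.last l) = q ∧
      ∀ i : Fin l, (c i.castSucc).1 = (c i.succ).1 ∨ (c i.castSucc).2 = (c i.succ).2 := by
  set step : U × V → U × V → Prop := fun x y => y ∈ M ∧ (x.1 = y.1 ∨ x.2 = y.2) with hstep
  set R : U × V → U × V → Prop := Relation.ReflTransGen step with hR
  suffices h : R p q from chain_of_reflTransGen M p q hp h
  -- rectangles: any point of M has an open rectangle neighborhood inside M
  have rect : ∀ x ∈ M, ∃ s t, IsOpen s ∧ IsOpen t ∧ x.1 ∈ s ∧ x.2 ∈ t ∧ s ×ˢ t ⊆ M := by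
    intro x hx
    obtain ⟨s, t, hs, ht, hxs, hxt, hsub⟩ := isOpen_prod_iff.mp hopen x.1 x.2 hx
    exact ⟨s, t, hs, ht, hxs, hxt, hsub⟩
  -- within a rectangle in M, any two points are R-related
  have rectR : ∀ (s : Set U) (t : Set V), s ×ˢ t ⊆ M → ∀ x ∈ s ×ˢ t, ∀ y ∈ s ×ˢ t, R x y := by
    intro s t hsub x hx y hy
    have hc : (x.1, y.2) ∈ s ×ˢ t := ⟨hx.1, hy.2⟩
    have h1 : step x (x.1, y.2) := ⟨hsub hc, Or.inl rfl⟩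
    have h2 : step (x.1, y.2) y := ⟨hsub hy, Or.inr rfl⟩
    exact Relation.ReflTransGen.tail (Relation.ReflTransGen.single h1) h2
  set A : Set (U × V) := {x | x ∈ M ∧ R p x} with hA
  set B : Set (U × V) := {x | x ∈ M ∧ ¬ R p x} with hB
  have hAopen : IsOpen A := by
    rw [isOpen_iff_forall_mem_open]
    intro x hx
    obtain ⟨s, t, hs, ht, hxs, hxt, hsub⟩ := rect x hx.1
    refine ⟨s ×ˢ t, fun y hy => ⟨hsub hy, hx.2.trans (rectR s t hsub x ⟨hxs, hxt⟩ y hy)⟩,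
      (hs.prod ht), ⟨hxs, hxt⟩⟩
  have hBopen : IsOpen B := by
    rw [isOpen_iff_forall_mem_open]
    intro x hx
    obtain ⟨s, t, hs, ht, hxs, hxt, hsub⟩ := rect x hx.1
    refine ⟨s ×ˢ t, fun y hy => ⟨hsub hy, fun hr => hx.2
      (hr.trans (rectR s t hsub y hy x ⟨hxs, hxt⟩))⟩, (hs.prod ht), ⟨hxs, hxt⟩⟩
  by_contra hcon
  have hsub : M ⊆ A ∪ B := fun x hx => by
    by_cases hr : R p x
    · exact Or.inl ⟨hx, hr⟩
    · exact Or.inr ⟨hx, hr⟩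
  have hAne : (M ∩ A).Nonempty := ⟨p, hp, hp, Relation.ReflTransGen.refl⟩
  have hBne : (M ∩ B).Nonempty := ⟨q, hq, hq, hcon⟩
  obtain ⟨x, -, hxA, hxB⟩ := hconn.2 A B hAopen hBopen hsub hAne hBne
  exact hxB.2 hxA.2
end
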